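/- Consider the Markov chain on ℕ with transition probabilities, for a fixed threshold n ≥ 1 and parameters α, β, a ∈ (0,1): from state 0, go to 0 with probability α and to 1 with probability 1−α; from state 1 ≤ k ≤ n−1, go to k+1 with probability β and to 0 with probability 1−β; from state k ≥ n, go to k+1 with probability a and to 0 with probability 1−a. Then the probability distribution σ defined by σ_0 = 1/(1 + (1−α)(1−β^n)/(1−β) + (1−α)aβ^{n−1}/(1−a)), σ_k = (1−α)β^{k−1}σ_0 for 1 ≤ k ≤ n, and σ_k = (1−α)β^{n−1}a^{k−n}σ_0 for k ≥ n+1, is a stationary distribution of this chain (i.e., it is nonnegative, sums to 1, and satisfies the balance equations σ = σP). -/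

import Mathlib

theorem stmt3 (α β a : ℝ) (hα : α ∈ Set.Ioo (0 : ℝ) 1) (hβ : β ∈ Set.Ioo (0 : ℝ) 1)
    (ha : a ∈ Set.Ioo (0 : ℝ) 1) (n : ℕ) (hn : 1 ≤ n)
    (P : ℕ → ℕ → ℝ)
    (hP : ∀ i j, P i j =
      if i = 0 then (if j = 0 then α else if j = 1 then 1 - α else 0)
      else if i < n then (if j = i + 1 then β else if j = 0 then 1 - β else 0)
      else (if j = i + 1 then a else if j = 0 then 1 - a else 0))
    (σ : ℕ → ℝ)
    (hσ0 : σ 0 = 1 / (1 + (1 - α) * (1 - β ^ n) / (1 - β) + (1 - α) * a * β ^ (n - 1) / (1 - a)))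
    (hσ1 : ∀ k, 1 ≤ k → k ≤ n → σ k = (1 - α) * β ^ (k - 1) * σ 0)
    (hσ2 : ∀ k, n + 1 ≤ k → σ k = (1 - α) * β ^ (n - 1) * a ^ (k - n) * σ 0) :
    (∀ k, 0 ≤ σ k) ∧ Summable σ ∧ (∑' k : ℕ, σ k) = 1 ∧
    ∀ j : ℕ, σ j = ∑' i : ℕ, σ i * P i j := by
  obtain ⟨hα0, hα1⟩ := hα
  obtain ⟨hβ0, hβ1⟩ := hβ
  obtain ⟨ha0, ha1⟩ := ha
  obtain ⟨m, rfl⟩ : ∃ m, n = m + 1 := ⟨n - 1, by omega⟩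
  simp only [Nat.add_sub_cancel] at hσ0 hσ2
  have h1β : (0:ℝ) < 1 - β := by linarith
  have h1a : (0:ℝ) < 1 - a := by linarith
  have hc : (0:ℝ) < 1 - α := by linarith
  have hβm1 : β ^ (m + 1) < 1 := pow_lt_one₀ hβ0.le hβ1 (Nat.succ_ne_zero m)
  have hD : 0 < 1 + (1 - α) * (1 - β ^ (m+1)) / (1 - β) + (1 - α) * a * β ^ m / (1 - a) := by
    have t1 : 0 ≤ (1 - α) * (1 - β ^ (m+1)) / (1 - β) :=
      div_nonneg (mul_nonneg hc.le (by linarith)) h1β.le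
    have t2 : 0 ≤ (1 - α) * a * β ^ m / (1 - a) :=
      div_nonneg (mul_nonneg (mul_nonneg hc.le ha0.le) (pow_pos hβ0 m).le) h1a.le
    linarith
  have hσ0pos : 0 < σ 0 := by rw [hσ0]; exact one_div_pos.mpr hD
  have hnn : ∀ k, 0 ≤ σ k := by
    intro k
    rcases Nat.lt_or_ge k 1 with h | h
    · interval_cases k; exact hσ0pos.le
    · rcases le_or_gt k (m+1) with h2 | h2
      · rw [hσ1 k h h2]
        exact mul_nonneg (mul_nonneg hc.le (pow_pos hβ0 _).le) hσ0pos.le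
      · rw [hσ2 k h2]
        exact mul_nonneg (mul_nonneg (mul_nonneg hc.le (pow_pos hβ0 _).le)
          (pow_pos ha0 _).le) hσ0pos.le
  have htail : (fun i : ℕ => σ (i + (m + 2))) = fun i => ((1-α) * β ^ m * σ 0 * a) * a ^ i := by
    funext i
    rw [hσ2 (i + (m+2)) (by omega)]
    have h : i + (m + 2) - (m + 1) = i + 1 := by omega
    rw [h, pow_succ]
    ring
  have hgeo : Summable (fun i : ℕ => ((1-α) * β ^ m * σ 0 * a) * a ^ i) :=
    (summable_geometric_of_lt_one ha0.le ha1).mul_left _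
  have hS : Summable σ := by
    rw [← summable_nat_add_iff (m + 2)]
    rw [htail]; exact hgeo
  have htailsum : ∑' i : ℕ, σ (i + (m + 2)) = (1-α) * β ^ m * σ 0 * a / (1 - a) := by
    rw [htail, tsum_mul_left, tsum_geometric_of_lt_one ha0.le ha1, div_eq_mul_inv]
  have hβne : β - 1 ≠ 0 := by linarith
  have hβne' : (1:ℝ) - β ≠ 0 := h1β.ne'
  have hane : (1:ℝ) - a ≠ 0 := h1a.ne'
  have hhead : ∑ i ∈ Finset.range (m + 2), σ i
      = σ 0 + (1-α) * σ 0 * ((1 - β ^ (m+1)) / (1 - β)) := by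
    rw [Finset.sum_range_succ']
    have e2 : ∀ i ∈ Finset.range (m+1), σ (i+1) = ((1-α) * σ 0) * β ^ i := by
      intro i hi
      have hi' := Finset.mem_range.mp hi
      rw [hσ1 (i+1) (by omega) (by omega), Nat.add_sub_cancel]
      ring
    rw [Finset.sum_congr rfl e2, ← Finset.mul_sum, geom_sum_eq hβ1.ne]
    field_simp
    ring
  have htot : (∑' k : ℕ, σ k) = 1 := by
    rw [← Summable.sum_add_tsum_nat_add (m+2) hS, hhead, htailsum]
    have h : σ 0 + (1-α) * σ 0 * ((1 - β^(m+1))/(1-β)) + (1-α) * β^m * σ 0 * a/(1-a)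
        = σ 0 * (1 + (1 - α) * (1 - β ^ (m+1)) / (1 - β) + (1 - α) * a * β ^ m / (1 - a)) := by
      field_simp
    rw [h, hσ0, one_div_mul_cancel hD.ne']
  refine ⟨hnn, hS, htot, ?_⟩
  have hP01 : ∀ i, 0 ≤ P i 0 ∧ P i 0 ≤ 1 := by
    intro i; rw [hP]; split_ifs <;> constructor <;> linarith
  have hSg : Summable (fun i => σ i * P i 0) :=
    Summable.of_nonneg_of_le (fun i => mul_nonneg (hnn i) (hP01 i).1)
      (fun i => mul_le_of_le_one_right (hnn i) (hP01 i).2) hS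
  have hbal0 : σ 0 = ∑' i : ℕ, σ i * P i 0 := by
    rw [← Summable.sum_add_tsum_nat_add (m+2) hSg]
    have htail0 : ∑' i : ℕ, σ (i + (m+2)) * P (i + (m+2)) 0
        = (1-α) * β ^ m * σ 0 * a := by
      have e : (fun i : ℕ => σ (i + (m+2)) * P (i + (m+2)) 0)
          = fun i => ((1-α) * β ^ m * σ 0 * a * (1-a)) * a ^ i := by
        funext i
        rw [hP]
        have h1 : ¬ (i + (m+2) = 0) := by omega
        have h2 : ¬ (i + (m+2) < m+1) := by omega
        have h3 : ¬ ((0:ℕ) = i + (m+2) + 1) := by omega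
        rw [if_neg h1, if_neg h2, if_neg h3, if_pos rfl]
        rw [hσ2 (i + (m+2)) (by omega)]
        have h4 : i + (m+2) - (m+1) = i + 1 := by omega
        rw [h4, pow_succ]; ring
      rw [e, tsum_mul_left, tsum_geometric_of_lt_one ha0.le ha1]
      field_simp
    have hhead0 : ∑ i ∈ Finset.range (m+2), σ i * P i 0
        = α * σ 0 + (1-α) * σ 0 * (1 - β ^ m) + (1-α) * β ^ m * σ 0 * (1-a) := by
      rw [Finset.sum_range_succ, Finset.sum_range_succ']
      have e0 : P 0 0 = α := by rw [hP]; simp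
      have e1 : P (m+1) 0 = 1 - a := by
        rw [hP]
        have h1 : ¬ (m+1 = 0) := by omega
        have h2 : ¬ (m+1 < m+1) := by omega
        have h3 : ¬ ((0:ℕ) = m+1+1) := by omega
        rw [if_neg h1, if_neg h2, if_neg h3, if_pos rfl]
      have e2 : ∀ i ∈ Finset.range m, σ (i+1) * P (i+1) 0 = ((1-α) * σ 0 * (1-β)) * β ^ i := by
        intro i hi
        have hi' := Finset.mem_range.mp hi
        rw [hP]
        have h1 : ¬ (i+1 = 0) := by omega
        have h2 : i + 1 < m + 1 := by omega
        have h3 : ¬ ((0:ℕ) = i + 1 + 1) := by omega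
        rw [if_neg h1, if_pos h2, if_neg h3, if_pos rfl]
        rw [hσ1 (i+1) (by omega) (by omega), Nat.add_sub_cancel]
        ring
      rw [Finset.sum_congr rfl e2, ← Finset.mul_sum, geom_sum_eq hβ1.ne, e0, e1,
          hσ1 (m+1) (by omega) le_rfl, Nat.add_sub_cancel]
      field_simp
      ring
    rw [hhead0, htail0]
    ring
  intro j
  rcases Nat.eq_zero_or_pos j with rfl | hj
  · exact hbal0
  rcases Nat.lt_or_ge j 2 with hj2 | hj2
  · have hj1 : j = 1 := by omega
    subst hj1
    have hz : ∀ i : ℕ, i ≠ 0 → σ i * P i 1 = 0 := by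
      intro i hi
      have h : P i 1 = 0 := by
        rw [hP]
        have h1 : ¬ ((1:ℕ) = i + 1) := by omega
        have h2 : ¬ ((1:ℕ) = 0) := by omega
        rw [if_neg hi]
        by_cases t2 : i < m+1
        · rw [if_pos t2, if_neg h1, if_neg h2]
        · rw [if_neg t2, if_neg h1, if_neg h2]
      rw [h, mul_zero]
    have hP01' : P 0 1 = 1 - α := by
      rw [hP]; norm_num
    rw [tsum_eq_single 0 hz, hP01', hσ1 1 le_rfl (by omega)]
    norm_num
    ring
  · have hz : ∀ i : ℕ, i ≠ j - 1 → σ i * P i j = 0 := by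
      intro i hi
      have h : P i j = 0 := by
        rw [hP]
        have h1 : ¬ (j = i + 1) := by omega
        have h2 : ¬ (j = 0) := by omega
        have h3 : ¬ (j = 1) := by omega
        by_cases t : i = 0
        · rw [if_pos t, if_neg h2, if_neg h3]
        · rw [if_neg t]
          by_cases t2 : i < m+1
          · rw [if_pos t2, if_neg h1, if_neg h2]
          · rw [if_neg t2, if_neg h1, if_neg h2]
      rw [h, mul_zero]
    rw [tsum_eq_single (j-1) hz, hP]
    have hne : ¬ (j - 1 = 0) := by omega
    have heq : j = (j - 1) + 1 := by omega
    rw [if_neg hne]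
    by_cases hcase : j - 1 < m + 1
    · rw [if_pos hcase, if_pos heq]
      rw [hσ1 (j-1) (by omega) (by omega), hσ1 j (by omega) (by omega)]
      have hpow : β ^ (j - 1 - 1) * β = β ^ (j - 1) := by
        rw [← pow_succ]; congr 1; omega
      linear_combination (-(1-α) * σ 0) * hpow
    · rw [if_neg hcase, if_pos heq]
      rcases Nat.lt_or_ge (j-1) (m+2) with hc2 | hc2
      · have hj' : j = m + 2 := by omega
        subst hj'
        rw [hσ1 (m+2-1) (by omega) (by omega), hσ2 (m+2) (by omega)]
        have h4 : m + 2 - (m+1) = 1 := by omega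
        have h5 : m + 2 - 1 - 1 = m := by omega
        rw [h4, h5, pow_one]
        ring
      · rw [hσ2 (j-1) (by omega), hσ2 j (by omega)]
        have hpow : a ^ (j - 1 - (m+1)) * a = a ^ (j - (m+1)) := by
          rw [← pow_succ]; congr 1; omega
        linear_combination (-(1-α) * β ^ m * σ 0) * hpow
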